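/- Let ρ > 0, ν > 0, c > 0, N₀ ∈ ℝ. Then N(t) = N₀ Γ(ρ) t^{ρ-1} E_{ν,ρ}(-(ct)^ν), where E_{ν,ρ} is the two-parameter Mittag-Leffler function, satisfies N(t) - N₀ t^{ρ-1} = -c^ν (₀D_t^{-ν} N)(t) for all t > 0. -/

import Mathlib

open MeasureTheory Real

section KineticAux

open Set

lemma gamma_ratio {y ν : ℝ} (hy : 2 ≤ y) (hν : 0 < ν) :
    Real.Gamma y * (y - 1) ^ ν ≤ Real.Gamma (y + ν) := by
  have h1 : (0:ℝ) < y - 1 := by linarith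
  have hy0 : (0:ℝ) < y := by linarith
  have hyn : (0:ℝ) < y + ν := by linarith
  have hslope := Real.convexOn_log_Gamma.slope_mono_adjacent
    (x := y - 1) (y := y) (z := y + ν) (mem_Ioi.2 h1) (mem_Ioi.2 hyn)
    (by linarith) (by linarith)
  simp only [Function.comp_apply] at hslope
  have hΓ1 : Real.Gamma y = (y - 1) * Real.Gamma (y - 1) := by
    have := Real.Gamma_add_one (s := y - 1) h1.ne'
    rw [sub_add_cancel] at this
    exact this
  have hΓpos : ∀ {z : ℝ}, 0 < z → 0 < Real.Gamma z := fun hz => Real.Gamma_pos_of_pos hz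
  have hlog : Real.log (Real.Gamma y) - Real.log (Real.Gamma (y - 1)) = Real.log (y - 1) := by
    rw [hΓ1, Real.log_mul h1.ne' (hΓpos h1).ne']
    ring
  have h2 : Real.log (y - 1) * ν ≤ Real.log (Real.Gamma (y + ν)) - Real.log (Real.Gamma y) := by
    have hd : y - (y - 1) = 1 := by ring
    rw [hd, div_one, hlog] at hslope
    have hd2 : y + ν - y = ν := by ring
    rw [hd2] at hslope
    calc Real.log (y - 1) * ν ≤ ((Real.log (Real.Gamma (y + ν)) - Real.log (Real.Gamma y)) / ν) * ν := by
          exact mul_le_mul_of_nonneg_right hslope hν.le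
      _ = _ := by field_simp
  have := Real.exp_le_exp.2 (by linarith : Real.log (Real.Gamma y) + Real.log (y - 1) * ν ≤ Real.log (Real.Gamma (y + ν)))
  rwa [Real.exp_add, Real.exp_log (hΓpos hy0), ← Real.rpow_def_of_pos h1,
    Real.exp_log (hΓpos hyn)] at this

lemma ml_summable {ν ρ x : ℝ} (hν : 0 < ν) (hρ : 0 < ρ) (hx : 0 ≤ x) :
    Summable (fun k : ℕ => x ^ k / Real.Gamma (ν * k + ρ)) := by
  apply summable_of_ratio_norm_eventually_le (r := 1/2) (by norm_num)
  have htend : Filter.Tendsto (fun k : ℕ => ν * k + ρ) Filter.atTop Filter.atTop := by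
    apply Filter.tendsto_atTop_add_const_right
    exact Filter.Tendsto.const_mul_atTop hν tendsto_natCast_atTop_atTop
  have hev : ∀ᶠ k : ℕ in Filter.atTop, 2 ≤ ν * k + ρ ∧ 2 * x ≤ (ν * k + ρ - 1) ^ ν := by
    have h1 : ∀ᶠ k : ℕ in Filter.atTop, max 2 (1 + (2*x) ^ ν⁻¹) ≤ ν * k + ρ :=
      htend.eventually_ge_atTop _
    filter_upwards [h1] with k hk
    have h2 : 2 ≤ ν * k + ρ := le_trans (le_max_left _ _) hk
    refine ⟨h2, ?_⟩
    have h3 : (2*x) ^ ν⁻¹ ≤ ν * k + ρ - 1 := by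
      have := le_trans (le_max_right _ _) hk; linarith
    calc 2 * x = ((2*x) ^ ν⁻¹) ^ ν := (Real.rpow_inv_rpow (by linarith) hν.ne').symm
      _ ≤ (ν * k + ρ - 1) ^ ν :=
          Real.rpow_le_rpow (Real.rpow_nonneg (by linarith) _) h3 hν.le
  filter_upwards [hev] with k ⟨h2, hxb⟩
  have hy1 : (1:ℝ) < ν * k + ρ - 1 + 1 := by linarith
  have hΓpos : 0 < Real.Gamma (ν * k + ρ) := Real.Gamma_pos_of_pos (by linarith)
  have hΓpos' : 0 < Real.Gamma (ν * (k+1) + ρ) := Real.Gamma_pos_of_pos (by positivity)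
  have hratio : Real.Gamma (ν * k + ρ) * (ν * k + ρ - 1) ^ ν ≤ Real.Gamma (ν * (k+1) + ρ) := by
    have := gamma_ratio (y := ν * k + ρ) h2 hν
    convert this using 2 <;> push_cast <;> ring
  push_cast
  rw [Real.norm_eq_abs, Real.norm_eq_abs, abs_div, abs_div, abs_of_nonneg (pow_nonneg hx _),
    abs_of_nonneg (pow_nonneg hx _), abs_of_pos hΓpos', abs_of_pos hΓpos]
  rcases eq_or_lt_of_le hx with h0 | hx0
  · rw [← h0, zero_pow (Nat.succ_ne_zero k), zero_div]
    positivity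
  · rw [div_le_iff₀ hΓpos']
    calc x ^ (k+1) = 1/2 * (2*x) * x ^ k := by ring
      _ ≤ 1/2 * ((ν * k + ρ - 1) ^ ν) * x ^ k := by gcongr
      _ = 1/2 * (x ^ k / Real.Gamma (ν * k + ρ)) * (Real.Gamma (ν * k + ρ) * (ν * k + ρ - 1) ^ ν) := by
          field_simp
      _ ≤ 1/2 * (x ^ k / Real.Gamma (ν * k + ρ)) * Real.Gamma (ν * (k+1) + ρ) :=
          mul_le_mul_of_nonneg_left hratio (by positivity)

lemma beta_intervalIntegrable {a b t : ℝ} (ha : 0 < a) (hb : 0 < b) (ht : 0 < t) :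
    IntervalIntegrable (fun u => u ^ (a-1) * (t-u) ^ (b-1)) volume 0 t := by
  have ht2 : 0 < t/2 := by linarith
  have hpart1 : IntervalIntegrable (fun u => u ^ (a-1) * (t-u) ^ (b-1)) volume 0 (t/2) := by
    apply IntervalIntegrable.mul_continuousOn
    · exact intervalIntegral.intervalIntegrable_rpow' (by linarith)
    · apply ContinuousOn.rpow_const (by fun_prop)
      intro u hu
      rw [uIcc_of_le ht2.le] at hu
      left
      have := hu.2
      intro h
      have : t - u = 0 → False := by intro h'; linarith [hu.2]
      exact this h
  have hpart2 : IntervalIntegrable (fun u => u ^ (a-1) * (t-u) ^ (b-1)) volume (t/2) t := by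
    apply IntervalIntegrable.continuousOn_mul
    · have base : IntervalIntegrable (fun x : ℝ => x ^ (b-1)) volume 0 (t/2) :=
        intervalIntegral.intervalIntegrable_rpow' (by linarith)
      have h3 := (base.comp_sub_left t).symm
      simp only [sub_zero] at h3
      have e : t - t/2 = t/2 := by ring
      rwa [e] at h3
    · apply ContinuousOn.rpow_const (by fun_prop)
      intro u hu
      rw [uIcc_of_le (by linarith : t/2 ≤ t)] at hu
      left
      intro h
      have := hu.1
      rw [h] at this
      linarith
  exact hpart1.trans hpart2

lemma beta_value {a b t : ℝ} (ha : 0 < a) (hb : 0 < b) (ht : 0 < t) :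
    ∫ u in (0:ℝ)..t, u ^ (a-1) * (t-u) ^ (b-1) =
      Real.Gamma a * Real.Gamma b / Real.Gamma (a+b) * t ^ (a+b-1) := by
  have hC := Complex.betaIntegral_scaled (a:ℂ) (b:ℂ) ht
  have heq : Set.EqOn (fun x:ℝ => ((x ^ (a-1) * (t-x) ^ (b-1) : ℝ) : ℂ))
      (fun x:ℝ => (x:ℂ) ^ ((a:ℂ)-1) * ((t:ℂ)-x) ^ ((b:ℂ)-1)) (Set.uIcc 0 t) := by
    intro x hx
    rw [uIcc_of_le ht.le] at hx
    have hx0 : (0:ℝ) ≤ x := hx.1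
    have htx : (0:ℝ) ≤ t - x := by linarith [hx.2]
    simp only
    push_cast
    rw [Complex.ofReal_cpow hx0, Complex.ofReal_cpow htx]
    push_cast
    ring
  have hI : ((∫ u in (0:ℝ)..t, u ^ (a-1) * (t-u) ^ (b-1) : ℝ) : ℂ)
      = (t:ℂ) ^ ((a:ℂ) + b - 1) * Complex.betaIntegral a b := by
    rw [← intervalIntegral.integral_ofReal, intervalIntegral.integral_congr heq, hC]
  have hΓab : Complex.Gamma ((a:ℂ) + (b:ℂ)) = (Real.Gamma (a+b) : ℂ) := by
    rw [← Complex.ofReal_add, Complex.Gamma_ofReal]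
  have hΓabne : (Real.Gamma (a+b) : ℂ) ≠ 0 := by
    simp only [ne_eq, Complex.ofReal_eq_zero]
    exact (Real.Gamma_pos_of_pos (by linarith)).ne'
  have hbeta : Complex.betaIntegral a b = ((Real.Gamma a * Real.Gamma b / Real.Gamma (a+b) : ℝ) : ℂ) := by
    have h := Complex.Gamma_mul_Gamma_eq_betaIntegral (s := (a:ℂ)) (t := (b:ℂ))
      (by simpa using ha) (by simpa using hb)
    rw [Complex.Gamma_ofReal, Complex.Gamma_ofReal, hΓab] at h
    rw [Complex.ofReal_div, Complex.ofReal_mul, eq_div_iff hΓabne, h]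
    ring
  have hpow : (t:ℂ) ^ ((a:ℂ) + b - 1) = ((t ^ (a + b - 1) : ℝ) : ℂ) := by
    rw [Complex.ofReal_cpow ht.le]
    push_cast
    ring_nf
  rw [hpow, hbeta, ← Complex.ofReal_mul] at hI
  have h2 : ∫ u in (0:ℝ)..t, u ^ (a-1) * (t-u) ^ (b-1)
      = t ^ (a + b - 1) * (Real.Gamma a * Real.Gamma b / Real.Gamma (a+b)) := by
    exact_mod_cast hI
  rw [h2]; ring

end KineticAux

/-- Two-parameter Mittag-Leffler function (real argument). -/
noncomputable def mittagLeffler2 (α β : ℝ) (z : ℝ) : ℝ :=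
  ∑' k : ℕ, z ^ k / Real.Gamma (α * k + β)

/-- Riemann–Liouville fractional integral of order ν. -/
noncomputable def rlInt (ν : ℝ) (f : ℝ → ℝ) (t : ℝ) : ℝ :=
  (1 / Real.Gamma ν) * ∫ u in (0:ℝ)..t, (t - u) ^ (ν - 1) * f u

theorem kinetic_power_solution_ml (ρ ν c : ℝ) (hρ : 0 < ρ) (hν : 0 < ν) (hc : 0 < c) (N₀ : ℝ)
    (N : ℝ → ℝ) (hN : N = fun t => N₀ * Real.Gamma ρ * t ^ (ρ - 1) * mittagLeffler2 ν ρ (-(c * t) ^ ν)) :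
    ∀ t : ℝ, 0 < t → N t - N₀ * t ^ (ρ - 1) = -(c ^ ν) * rlInt ν N t := by
  intro t ht
  set X : ℝ := (c * t) ^ ν with hX
  have hX0 : 0 ≤ X := Real.rpow_nonneg (by positivity) _
  set A : ℕ → ℝ := fun k => N₀ * Real.Gamma ρ * (-1)^k * c ^ (ν * k) / Real.Gamma (ν * k + ρ) with hA
  set g : ℕ → ℝ := fun j => (-1)^j * X^j / Real.Gamma (ν * j + ρ) with hg
  have hΓν : 0 < Real.Gamma ν := Real.Gamma_pos_of_pos hν
  have hΓρ : 0 < Real.Gamma ρ := Real.Gamma_pos_of_pos hρ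
  have hΓk : ∀ k : ℕ, 0 < Real.Gamma (ν * k + ρ) := fun k => Real.Gamma_pos_of_pos (by positivity)
  have hΓk' : ∀ k : ℕ, 0 < Real.Gamma (ν * k + ρ + ν) := fun k => Real.Gamma_pos_of_pos (by positivity)
  have S1 : Summable (fun k : ℕ => X ^ k / Real.Gamma (ν * k + ρ)) := ml_summable hν hρ hX0
  have S2 : Summable (fun k : ℕ => X ^ k / Real.Gamma (ν * k + (ρ + ν))) :=
    ml_summable hν (by positivity) hX0
  have hXpow : ∀ (u : ℝ), 0 < u → ∀ k : ℕ, ((c * u) ^ ν) ^ k = c ^ (ν * k) * u ^ (ν * k) := by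
    intro u hu k
    rw [← Real.rpow_natCast ((c*u) ^ ν) k, ← Real.rpow_mul (by positivity),
      Real.mul_rpow hc.le hu.le]
  -- pointwise expansion of N
  have hNu : ∀ u : ℝ, 0 < u → N u = ∑' k : ℕ, A k * u ^ (ν * k + ρ - 1) := by
    intro u hu
    rw [hN]
    simp only [mittagLeffler2]
    rw [← tsum_mul_left]
    apply tsum_congr
    intro k
    have h1 : (-(c * u) ^ ν) ^ k = (-1)^k * (c ^ (ν * k) * u ^ (ν * k)) := by
      rw [neg_pow, hXpow u hu k]
    have h2 : u ^ (ν * k + ρ - 1) = u ^ (ν * (k:ℝ)) * u ^ (ρ - 1) := by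
      rw [← Real.rpow_add hu]; congr 1; ring
    rw [h1, hA, h2]
    ring
  set F : ℕ → ℝ → ℝ := fun k u => A k * (u ^ (ν * k + ρ - 1) * (t - u) ^ (ν - 1)) with hF
  have hFint : ∀ k : ℕ, IntegrableOn (F k) (Set.Ioc 0 t) := by
    intro k
    exact ((beta_intervalIntegrable (a := ν * k + ρ) (b := ν)
      (by positivity) hν ht).1).const_mul _
  have hIoc : ∀ k : ℕ, ∫ u in Set.Ioc (0:ℝ) t, u ^ (ν * k + ρ - 1) * (t - u) ^ (ν - 1)
      = Real.Gamma (ν * k + ρ) * Real.Gamma ν / Real.Gamma (ν * k + ρ + ν) * t ^ (ν * k + ρ + ν - 1) := by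
    intro k
    rw [← intervalIntegral.integral_of_le ht.le]
    exact beta_value (by positivity) hν ht
  have habsA : ∀ k : ℕ, |A k| = |N₀| * Real.Gamma ρ * c ^ (ν * k) / Real.Gamma (ν * k + ρ) := by
    intro k
    rw [hA]
    rw [abs_div, abs_of_pos (hΓk k), abs_mul, abs_mul, abs_mul, abs_pow, abs_neg, abs_one,
      one_pow, mul_one, abs_of_pos hΓρ, abs_of_nonneg (Real.rpow_nonneg hc.le _)]
  have hnorm : ∀ k : ℕ, (∫ u in Set.Ioc (0:ℝ) t, ‖F k u‖)
      = |A k| * (Real.Gamma (ν * k + ρ) * Real.Gamma ν / Real.Gamma (ν * k + ρ + ν) * t ^ (ν * k + ρ + ν - 1)) := by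
    intro k
    rw [← hIoc k, ← MeasureTheory.integral_const_mul]
    apply MeasureTheory.setIntegral_congr_fun measurableSet_Ioc
    intro u hu
    have h1 : 0 ≤ u ^ (ν * k + ρ - 1) := Real.rpow_nonneg hu.1.le _
    have h2 : 0 ≤ (t - u) ^ (ν - 1) := Real.rpow_nonneg (by linarith [hu.2]) _
    rw [hF]
    simp only [norm_mul, Real.norm_eq_abs, abs_of_nonneg h1, abs_of_nonneg h2, abs_mul]
  have hsumnorm : Summable (fun k : ℕ => ∫ u in Set.Ioc (0:ℝ) t, ‖F k u‖) := by
    apply ((S2.mul_left (|N₀| * Real.Gamma ρ * Real.Gamma ν * t ^ (ρ + ν - 1))).congr)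
    intro k
    rw [hnorm k, habsA k]
    have e1 : t ^ (ν * k + ρ + ν - 1) = t ^ (ν * (k:ℝ)) * t ^ (ρ + ν - 1) := by
      rw [← Real.rpow_add ht]; congr 1; ring
    have e2 : Real.Gamma (ν * k + (ρ + ν)) = Real.Gamma (ν * k + ρ + ν) := by ring_nf
    have e3 : X ^ k = c ^ (ν * k) * t ^ (ν * k) := hXpow t ht k ▸ by
      rw [hX, hXpow t ht k]
    rw [e1, e2, e3]
    field_simp
  -- the integral identity
  have key : ∫ u in Set.Ioc (0:ℝ) t, (t - u) ^ (ν - 1) * N u = ∑' k : ℕ, ∫ u in Set.Ioc (0:ℝ) t, F k u := by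
    rw [MeasureTheory.integral_tsum_of_summable_integral_norm hFint hsumnorm]
    apply MeasureTheory.setIntegral_congr_fun measurableSet_Ioc
    intro u hu
    show (t - u) ^ (ν - 1) * N u = ∑' k : ℕ, F k u
    rw [hNu u hu.1, ← tsum_mul_left]
    apply tsum_congr
    intro k
    rw [hF]
    ring
  have hrl : rlInt ν N t = (1 / Real.Gamma ν) *
      ∑' k : ℕ, A k * (Real.Gamma (ν * k + ρ) * Real.Gamma ν / Real.Gamma (ν * k + ρ + ν) * t ^ (ν * k + ρ + ν - 1)) := by
    rw [rlInt, intervalIntegral.integral_of_le ht.le, key]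
    congr 1
    apply tsum_congr
    intro k
    rw [hF]
    simp only
    rw [MeasureTheory.integral_const_mul, hIoc k]
  have hgsum : Summable g := by
    apply Summable.of_norm
    apply S1.congr
    intro j
    rw [hg]
    simp only [Real.norm_eq_abs, abs_div, abs_mul, abs_pow, abs_neg, abs_one, one_pow, one_mul,
      abs_of_nonneg hX0, abs_of_pos (hΓk j)]
  have hml : mittagLeffler2 ν ρ (-X) = ∑' j : ℕ, g j := by
    apply tsum_congr
    intro j
    rw [hg, neg_pow]
  have hterm : ∀ k : ℕ, (-(c ^ ν) * (1 / Real.Gamma ν)) *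
      (A k * (Real.Gamma (ν * k + ρ) * Real.Gamma ν / Real.Gamma (ν * k + ρ + ν) * t ^ (ν * k + ρ + ν - 1)))
      = (N₀ * Real.Gamma ρ * t ^ (ρ - 1)) * g (k + 1) := by
    intro k
    have e2 : ν * ((k+1 : ℕ) : ℝ) + ρ = ν * k + ρ + ν := by push_cast; ring
    have e3 : X ^ (k+1) = (c ^ ν * c ^ (ν * k)) * (t ^ (ρ-1))⁻¹ * t ^ (ν * k + ρ + ν - 1) := by
      rw [hX, hXpow t ht (k+1)]
      have c1 : c ^ (ν * ((k+1:ℕ):ℝ)) = c ^ ν * c ^ (ν * k) := by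
        rw [← Real.rpow_add hc]; congr 1; push_cast; ring
      have c2 : t ^ (ν * ((k+1:ℕ):ℝ)) = (t ^ (ρ-1))⁻¹ * t ^ (ν * k + ρ + ν - 1) := by
        rw [← Real.rpow_neg ht.le, ← Real.rpow_add ht]; congr 1; push_cast; ring
      rw [c1, c2]; ring
    rw [hg, hA]
    simp only
    rw [e2, e3, pow_succ]
    have htp : (0:ℝ) < t ^ (ρ - 1) := Real.rpow_pos_of_pos ht _
    field_simp
  -- put everything together
  have hg0 : g 0 = 1 / Real.Gamma ρ := by rw [hg]; simp
  have hrhs : -(c ^ ν) * rlInt ν N t = N₀ * Real.Gamma ρ * t ^ (ρ - 1) * ∑' k : ℕ, g (k + 1) := by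
    rw [hrl, ← mul_assoc, ← tsum_mul_left, tsum_congr hterm, tsum_mul_left]
  rw [hrhs]
  conv_lhs => rw [hN]
  simp only
  rw [← hX, hml, Summable.tsum_eq_zero_add hgsum, hg0]
  field_simp
  ring
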